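/- Wire homeomorphism is a confluent and terminating rewrite relation on labelled interfaced DAGs when oriented as removal of interior wire nodes: every LIDAG reduces to a unique normal form with no removable wire nodes, hence two LIDAGs are wire-homeomorphic iff their normal forms are isomorphic. -/

import Mathlib

/-- A finite labelled interfaced DAG (the acyclicity plays no role in the rewriting
statement): a finite directed graph with partial labelling and interface lists. -/
structure FDia (L : Type) (m n : ℕ) : Type 1 where
  V : Type
  [fin : Fintype V]
  [deq : DecidableEq V]
  E : V → V → Prop
  label : V → Option L
  ins : Fin m → V
  outs : Fin n → V

attribute [instance] FDia.fin FDia.deq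

/-- Isomorphism of labelled interfaced graphs. -/
def Iso {L : Type} {m n : ℕ} (D₁ D₂ : FDia L m n) : Prop :=
  ∃ e : D₁.V ≃ D₂.V,
    (∀ u v, D₁.E u v ↔ D₂.E (e u) (e v)) ∧
    (∀ v, D₂.label (e v) = D₁.label v) ∧
    (∀ i, e (D₁.ins i) = D₂.ins i) ∧
    (∀ j, e (D₁.outs j) = D₂.outs j)

/-- Removal of an interior wire node `w` with in-edge from `u` and out-edge to `v`,
replacing the two edges by the single edge `(u, v)`. -/
def removeWire {L : Type} {m n : ℕ} (D : FDia L m n) (w u v : D.V)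
    (hin : ∀ i, D.ins i ≠ w) (hout : ∀ j, D.outs j ≠ w) : FDia L m n where
  V := {z : D.V // z ≠ w}
  E a b := D.E a.1 b.1 ∨ (a.1 = u ∧ b.1 = v)
  label a := D.label a.1
  ins i := ⟨D.ins i, hin i⟩
  outs j := ⟨D.outs j, hout j⟩

/-- One step of the removal-oriented wire homeomorphism rewrite: remove an unlabelled
non-interface node `w` with exactly one incoming edge `(u, w)` and one outgoing edge
`(w, v)`. -/
def Step {L : Type} {m n : ℕ} (D₁ D₂ : FDia L m n) : Prop :=
  ∃ (w u v : D₁.V), D₁.label w = none ∧ D₁.E u w ∧ D₁.E w v ∧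
    (∀ z, D₁.E z w → z = u) ∧ (∀ z, D₁.E w z → z = v) ∧
    ∃ (hin : ∀ i, D₁.ins i ≠ w) (hout : ∀ j, D₁.outs j ≠ w),
      Iso D₂ (removeWire D₁ w u v hin hout)

/-- A diagram is in normal form when no wire node can be removed. -/
def NormalForm {L : Type} {m n : ℕ} (D : FDia L m n) : Prop := ¬ ∃ D', Step D D'

section Aux
variable {L : Type} {m n : ℕ}

lemma iso_refl (D : FDia L m n) : Iso D D :=
  ⟨Equiv.refl _, fun _ _ => Iff.rfl, fun _ => rfl, fun _ => rfl, fun _ => rfl⟩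

lemma iso_symm {A B : FDia L m n} (h : Iso A B) : Iso B A := by
  obtain ⟨e, hE, hl, hi, ho⟩ := h
  refine ⟨e.symm, fun u v => ?_, fun v => ?_, fun i => ?_, fun j => ?_⟩
  · rw [hE (e.symm u) (e.symm v), e.apply_symm_apply, e.apply_symm_apply]
  · rw [← hl (e.symm v), e.apply_symm_apply]
  · rw [← hi i, e.symm_apply_apply]
  · rw [← ho j, e.symm_apply_apply]

lemma iso_trans {A B C : FDia L m n} (h₁ : Iso A B) (h₂ : Iso B C) : Iso A C := by
  obtain ⟨e, hE, hl, hi, ho⟩ := h₁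
  obtain ⟨f, fE, fl, fi, fo⟩ := h₂
  refine ⟨e.trans f, fun u v => ?_, fun v => ?_, fun i => ?_, fun j => ?_⟩
  · simpa using (hE u v).trans (fE (e u) (e v))
  · simpa using (fl (e v)).trans (hl v)
  · simpa using (congrArg f (hi i)).trans (fi i)
  · simpa using (congrArg f (ho j)).trans (fo j)

lemma iso_card {A B : FDia L m n} (h : Iso A B) :
    Fintype.card A.V = Fintype.card B.V := by
  obtain ⟨e, -⟩ := h; exact Fintype.card_congr e

lemma step_card {A B : FDia L m n} (h : Step A B) :
    Fintype.card B.V < Fintype.card A.V := by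
  obtain ⟨w, u, v, -, -, -, -, -, hin, hout, hiso⟩ := h
  rw [iso_card hiso]
  exact Fintype.card_subtype_lt (x := w) (by simp)

/-- transport removeWire along an isomorphism -/
lemma removeWire_iso {A B : FDia L m n} (e : A.V ≃ B.V)
    (hE : ∀ u v, A.E u v ↔ B.E (e u) (e v))
    (hl : ∀ v, B.label (e v) = A.label v)
    (hi : ∀ i, e (A.ins i) = B.ins i) (ho : ∀ j, e (A.outs j) = B.outs j)
    (w u v : A.V) (hinA : ∀ i, A.ins i ≠ w) (houtA : ∀ j, A.outs j ≠ w)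
    (hinB : ∀ i, B.ins i ≠ e w) (houtB : ∀ j, B.outs j ≠ e w) :
    Iso (removeWire A w u v hinA houtA) (removeWire B (e w) (e u) (e v) hinB houtB) := by
  refine ⟨e.subtypeEquiv (fun z => by simp [not_iff_not, e.apply_eq_iff_eq]), ?_, ?_, ?_, ?_⟩
  · rintro ⟨a, ha⟩ ⟨b, hb⟩
    simp only [removeWire, Equiv.subtypeEquiv_apply]
    constructor
    · rintro (h | ⟨rfl, rfl⟩)
      · exact Or.inl ((hE a b).1 h)
      · exact Or.inr ⟨rfl, rfl⟩
    · rintro (h | ⟨h1, h2⟩)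
      · exact Or.inl ((hE a b).2 h)
      · exact Or.inr ⟨e.injective h1, e.injective h2⟩
  · rintro ⟨a, ha⟩; exact hl a
  · intro i; exact Subtype.ext (hi i)
  · intro j; exact Subtype.ext (ho j)

lemma step_transport {A B C : FDia L m n} (hAB : Iso A B) (h : Step B C) :
    ∃ C', Step A C' ∧ Iso C' C := by
  obtain ⟨e, hE, hl, hi, ho⟩ := hAB
  obtain ⟨w, u, v, hlab, huw, hwv, hinu, houtv, hin, hout, hiso⟩ := h
  set w' := e.symm w with hw'
  have hew' : e w' = w := e.apply_symm_apply w
  have hinA : ∀ i, A.ins i ≠ w' := by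
    intro i hc; exact hin i (by rw [← hi i, hc, hew'])
  have houtA : ∀ j, A.outs j ≠ w' := by
    intro j hc; exact hout j (by rw [← ho j, hc, hew'])
  refine ⟨removeWire A w' (e.symm u) (e.symm v) hinA houtA, ?_, ?_⟩
  · refine ⟨w', e.symm u, e.symm v, ?_, ?_, ?_, ?_, ?_, hinA, houtA, iso_refl _⟩
    · rw [← hl w', hew', hlab]
    · rw [hE]; simpa [hew'] using huw
    · rw [hE]; simpa [hew'] using hwv
    · intro z hz
      have := hinu (e z) (by rw [← hew']; exact (hE z w').1 hz)
      rw [← this, e.symm_apply_apply]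
    · intro z hz
      have := houtv (e z) (by rw [← hew']; exact (hE w' z).1 hz)
      rw [← this, e.symm_apply_apply]
  · have h1 := removeWire_iso e hE hl hi ho w' (e.symm u) (e.symm v) hinA houtA
      (by simpa [hew'] using hin) (by simpa [hew'] using hout)
    simp only [hew', e.apply_symm_apply] at h1
    exact iso_trans h1 (iso_symm hiso)

lemma rtg_transport {A B C : FDia L m n} (hAB : Iso A B)
    (h : Relation.ReflTransGen Step B C) :
    ∃ C', Relation.ReflTransGen Step A C' ∧ Iso C' C := by
  induction h with
  | refl => exact ⟨A, .refl, hAB⟩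
  | tail _ hstep ih =>
      obtain ⟨C', hsteps, hiso⟩ := ih
      obtain ⟨C'', hstep', hiso'⟩ := step_transport hiso hstep
      exact ⟨C'', hsteps.tail hstep', hiso'⟩

lemma normal_transport {A B : FDia L m n} (h : Iso A B) (hB : NormalForm B) :
    NormalForm A := by
  rintro ⟨X, hX⟩
  obtain ⟨X', hX', -⟩ := step_transport (iso_symm h) hX
  exact hB ⟨X', hX'⟩

end Aux

section Conf
variable {L : Type} {m n : ℕ}

lemma step_to_remove {A : FDia L m n} {w u v : A.V} (hlab : A.label w = none)
    (huw : A.E u w) (hwv : A.E w v) (hu : ∀ z, A.E z w → z = u)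
    (hv : ∀ z, A.E w z → z = v)
    (hin : ∀ i, A.ins i ≠ w) (hout : ∀ j, A.outs j ≠ w) :
    Step A (removeWire A w u v hin hout) :=
  ⟨w, u, v, hlab, huw, hwv, hu, hv, hin, hout, iso_refl _⟩

lemma double_iso (D : FDia L m n) (w₁ w₂ : D.V) (hw : w₁ ≠ w₂)
    (u₁ v₁ u₂ v₂ p₁ q₁ p₂ q₂ : D.V)
    (hin₁ : ∀ i, D.ins i ≠ w₁) (hout₁ : ∀ j, D.outs j ≠ w₁)
    (hin₂ : ∀ i, D.ins i ≠ w₂) (hout₂ : ∀ j, D.outs j ≠ w₂)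
    (hp₁ : p₁ ≠ w₁) (hq₁ : q₁ ≠ w₁) (hp₂ : p₂ ≠ w₂) (hq₂ : q₂ ≠ w₂)
    (hinA : ∀ i, (removeWire D w₁ u₁ v₁ hin₁ hout₁).ins i ≠ ⟨w₂, Ne.symm hw⟩)
    (houtA : ∀ j, (removeWire D w₁ u₁ v₁ hin₁ hout₁).outs j ≠ ⟨w₂, Ne.symm hw⟩)
    (hinB : ∀ i, (removeWire D w₂ u₂ v₂ hin₂ hout₂).ins i ≠ ⟨w₁, hw⟩)
    (houtB : ∀ j, (removeWire D w₂ u₂ v₂ hin₂ hout₂).outs j ≠ ⟨w₁, hw⟩)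
    (hE : ∀ a b : D.V, a ≠ w₁ → a ≠ w₂ → b ≠ w₁ → b ≠ w₂ →
      (((D.E a b ∨ (a = u₁ ∧ b = v₁)) ∨ (a = p₁ ∧ b = q₁)) ↔
       ((D.E a b ∨ (a = u₂ ∧ b = v₂)) ∨ (a = p₂ ∧ b = q₂)))) :
    Iso (removeWire (removeWire D w₁ u₁ v₁ hin₁ hout₁) ⟨w₂, Ne.symm hw⟩
          ⟨p₁, hp₁⟩ ⟨q₁, hq₁⟩ hinA houtA)
        (removeWire (removeWire D w₂ u₂ v₂ hin₂ hout₂) ⟨w₁, hw⟩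
          ⟨p₂, hp₂⟩ ⟨q₂, hq₂⟩ hinB houtB) := by
  refine ⟨⟨fun z => ⟨⟨z.1.1, fun h => z.2 (Subtype.ext h)⟩,
              fun h => z.1.2 (congrArg Subtype.val h)⟩,
           fun z => ⟨⟨z.1.1, fun h => z.2 (Subtype.ext h)⟩,
              fun h => z.1.2 (congrArg Subtype.val h)⟩,
           fun z => Subtype.ext (Subtype.ext rfl),
           fun z => Subtype.ext (Subtype.ext rfl)⟩, ?_, ?_, ?_, ?_⟩
  · rintro ⟨⟨a, ha1⟩, ha2'⟩ ⟨⟨b, hb1⟩, hb2'⟩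
    have ha2 : a ≠ w₂ := fun h => ha2' (Subtype.ext h)
    have hb2 : b ≠ w₂ := fun h => hb2' (Subtype.ext h)
    simp only [removeWire, Equiv.coe_fn_mk, Subtype.mk.injEq]
    rw [Subtype.ext_iff, Subtype.ext_iff]
    exact hE a b ha1 ha2 hb1 hb2
  · rintro ⟨⟨a, _⟩, _⟩; rfl
  · intro i; exact Subtype.ext (Subtype.ext rfl)
  · intro j; exact Subtype.ext (Subtype.ext rfl)

lemma local_conf {D D₁ D₂ : FDia L m n} (h₁ : Step D D₁) (h₂ : Step D D₂) :
    Iso D₁ D₂ ∨ ∃ E₁ E₂, Step D₁ E₁ ∧ Step D₂ E₂ ∧ Iso E₁ E₂ := by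
  obtain ⟨w₁, u₁, v₁, hlab₁, huw₁, hwv₁, hinu₁, houtv₁, hin₁, hout₁, hiso₁⟩ := h₁
  obtain ⟨w₂, u₂, v₂, hlab₂, huw₂, hwv₂, hinu₂, houtv₂, hin₂, hout₂, hiso₂⟩ := h₂
  by_cases hw : w₁ = w₂
  · subst hw
    left
    have hu : u₂ = u₁ := hinu₁ u₂ huw₂
    have hv : v₂ = v₁ := houtv₁ v₂ hwv₂
    refine iso_trans hiso₁ (iso_symm (iso_trans hiso₂ ?_))
    subst hu hv
    exact ⟨Equiv.refl _, fun _ _ => Iff.rfl, fun _ => rfl, fun _ => rfl, fun _ => rfl⟩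
  · right
    suffices h : ∃ T₁ T₂,
        Step (removeWire D w₁ u₁ v₁ hin₁ hout₁) T₁ ∧
        Step (removeWire D w₂ u₂ v₂ hin₂ hout₂) T₂ ∧ Iso T₁ T₂ by
      obtain ⟨T₁, T₂, hs₁, hs₂, hT⟩ := h
      obtain ⟨E₁, he₁, hi₁⟩ := step_transport hiso₁ hs₁
      obtain ⟨E₂, he₂, hi₂⟩ := step_transport hiso₂ hs₂
      exact ⟨E₁, E₂, he₁, he₂, iso_trans hi₁ (iso_trans hT (iso_symm hi₂))⟩
    have hw' : w₂ ≠ w₁ := Ne.symm hw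
    have hinA : ∀ i, (removeWire D w₁ u₁ v₁ hin₁ hout₁).ins i
        ≠ (⟨w₂, hw'⟩ : {z : D.V // z ≠ w₁}) :=
      fun i h => hin₂ i (congrArg Subtype.val h)
    have houtA : ∀ j, (removeWire D w₁ u₁ v₁ hin₁ hout₁).outs j
        ≠ (⟨w₂, hw'⟩ : {z : D.V // z ≠ w₁}) :=
      fun j h => hout₂ j (congrArg Subtype.val h)
    have hinB : ∀ i, (removeWire D w₂ u₂ v₂ hin₂ hout₂).ins i
        ≠ (⟨w₁, hw⟩ : {z : D.V // z ≠ w₂}) :=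
      fun i h => hin₁ i (congrArg Subtype.val h)
    have houtB : ∀ j, (removeWire D w₂ u₂ v₂ hin₂ hout₂).outs j
        ≠ (⟨w₁, hw⟩ : {z : D.V // z ≠ w₂}) :=
      fun j h => hout₁ j (congrArg Subtype.val h)
    by_cases h12 : v₁ = w₂ <;> by_cases h21 : v₂ = w₁
    · -- 2-cycle w₁ ↔ w₂
      have hu₁ : u₁ = w₂ := (hinu₁ w₂ (by rw [← h21]; exact hwv₂)).symm
      have hu₂ : u₂ = w₁ := (hinu₂ w₁ (by rw [← h12]; exact hwv₁)).symm
      refine ⟨_, _,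
        step_to_remove (A := removeWire D w₁ u₁ v₁ hin₁ hout₁) (w := ⟨w₂, hw'⟩) (u := ⟨w₂, hw'⟩) (v := ⟨w₂, hw'⟩)
          hlab₂ (Or.inr ⟨hu₁.symm, h12.symm⟩) (Or.inr ⟨hu₁.symm, h12.symm⟩) ?_ ?_ hinA houtA,
        step_to_remove (A := removeWire D w₂ u₂ v₂ hin₂ hout₂) (w := ⟨w₁, hw⟩) (u := ⟨w₁, hw⟩) (v := ⟨w₁, hw⟩)
          hlab₁ (Or.inr ⟨hu₂.symm, h21.symm⟩) (Or.inr ⟨hu₂.symm, h21.symm⟩) ?_ ?_ hinB houtB,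
        double_iso D w₁ w₂ hw u₁ v₁ u₂ v₂ w₂ w₂ w₁ w₁ hin₁ hout₁ hin₂ hout₂
          hw' hw' hw hw hinA houtA hinB houtB ?_⟩
      · rintro ⟨z, hz⟩ (h | ⟨hzu, -⟩)
        · exact absurd ((hinu₂ z h).trans hu₂) hz
        · exact Subtype.ext (hzu.trans hu₁)
      · rintro ⟨z, hz⟩ (h | ⟨-, hzv⟩)
        · exact absurd ((houtv₂ z h).trans h21) hz
        · exact Subtype.ext (hzv.trans h12)
      · rintro ⟨z, hz⟩ (h | ⟨hzu, -⟩)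
        · exact absurd ((hinu₁ z h).trans hu₁) hz
        · exact Subtype.ext (hzu.trans hu₂)
      · rintro ⟨z, hz⟩ (h | ⟨-, hzv⟩)
        · exact absurd ((houtv₁ z h).trans h12) hz
        · exact Subtype.ext (hzv.trans h21)
      · intro a b ha1 ha2 hb1 hb2
        subst hu₁ hu₂ h12 h21
        tauto
    · -- edge w₁ → w₂ only (v₁ = w₂)
      have hu₂ : u₂ = w₁ := (hinu₂ w₁ (by rw [← h12]; exact hwv₁)).symm
      have hu₁w₁ : u₁ ≠ w₁ := by
        intro h; rw [h] at huw₁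
        exact hw ((houtv₁ w₁ huw₁).trans h12)
      have hu₁w₂ : u₁ ≠ w₂ := by
        intro h; rw [h] at huw₁
        exact h21 (houtv₂ w₁ huw₁).symm
      have hv₂w₂ : v₂ ≠ w₂ := by
        intro h; rw [h] at hwv₂
        exact (Ne.symm hw) ((hinu₂ w₂ hwv₂).trans hu₂)
      have hv₂w₁ : v₂ ≠ w₁ := h21
      refine ⟨_, _,
        step_to_remove (A := removeWire D w₁ u₁ v₁ hin₁ hout₁) (w := ⟨w₂, hw'⟩) (u := ⟨u₁, hu₁w₁⟩) (v := ⟨v₂, hv₂w₁⟩)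
          hlab₂ (Or.inr ⟨rfl, h12.symm⟩) (Or.inl hwv₂) ?_ ?_ hinA houtA,
        step_to_remove (A := removeWire D w₂ u₂ v₂ hin₂ hout₂) (w := ⟨w₁, hw⟩) (u := ⟨u₁, hu₁w₂⟩) (v := ⟨v₂, hv₂w₂⟩)
          hlab₁ (Or.inl huw₁) (Or.inr ⟨hu₂.symm, rfl⟩) ?_ ?_ hinB houtB,
        double_iso D w₁ w₂ hw u₁ v₁ u₂ v₂ u₁ v₂ u₁ v₂ hin₁ hout₁ hin₂ hout₂
          hu₁w₁ hv₂w₁ hu₁w₂ hv₂w₂ hinA houtA hinB houtB ?_⟩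
      · rintro ⟨z, hz⟩ (h | ⟨hzu, -⟩)
        · exact absurd ((hinu₂ z h).trans hu₂) hz
        · exact Subtype.ext hzu
      · rintro ⟨z, hz⟩ (h | ⟨hzu, -⟩)
        · exact Subtype.ext (houtv₂ z h)
        · exact absurd hzu.symm hu₁w₂
      · rintro ⟨z, hz⟩ (h | ⟨-, hzv⟩)
        · exact Subtype.ext (hinu₁ z h)
        · exact absurd hzv.symm hv₂w₁
      · rintro ⟨z, hz⟩ (h | ⟨-, hzv⟩)
        · exact absurd ((houtv₁ z h).trans h12) hz
        · exact Subtype.ext hzv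
      · intro a b ha1 ha2 hb1 hb2
        subst hu₂ h12
        tauto
    · -- edge w₂ → w₁ only (v₂ = w₁)
      have hu₁ : u₁ = w₂ := (hinu₁ w₂ (by rw [← h21]; exact hwv₂)).symm
      have hu₂w₂ : u₂ ≠ w₂ := by
        intro h; rw [h] at huw₂
        exact (Ne.symm hw) ((houtv₂ w₂ huw₂).trans h21)
      have hu₂w₁ : u₂ ≠ w₁ := by
        intro h; rw [h] at huw₂
        exact h12 (houtv₁ w₂ huw₂).symm
      have hv₁w₁ : v₁ ≠ w₁ := by
        intro h; rw [h] at hwv₁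
        exact hw ((hinu₁ w₁ hwv₁).trans hu₁)
      have hv₁w₂ : v₁ ≠ w₂ := h12
      refine ⟨_, _,
        step_to_remove (A := removeWire D w₁ u₁ v₁ hin₁ hout₁) (w := ⟨w₂, hw'⟩) (u := ⟨u₂, hu₂w₁⟩) (v := ⟨v₁, hv₁w₁⟩)
          hlab₂ (Or.inl huw₂) (Or.inr ⟨hu₁.symm, rfl⟩) ?_ ?_ hinA houtA,
        step_to_remove (A := removeWire D w₂ u₂ v₂ hin₂ hout₂) (w := ⟨w₁, hw⟩) (u := ⟨u₂, hu₂w₂⟩) (v := ⟨v₁, hv₁w₂⟩)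
          hlab₁ (Or.inr ⟨rfl, h21.symm⟩) (Or.inl hwv₁) ?_ ?_ hinB houtB,
        double_iso D w₁ w₂ hw u₁ v₁ u₂ v₂ u₂ v₁ u₂ v₁ hin₁ hout₁ hin₂ hout₂
          hu₂w₁ hv₁w₁ hu₂w₂ hv₁w₂ hinA houtA hinB houtB ?_⟩
      · rintro ⟨z, hz⟩ (h | ⟨-, hzv⟩)
        · exact Subtype.ext (hinu₂ z h)
        · exact absurd hzv.symm h12
      · rintro ⟨z, hz⟩ (h | ⟨-, hzv⟩)
        · exact absurd ((houtv₂ z h).trans h21) hz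
        · exact Subtype.ext hzv
      · rintro ⟨z, hz⟩ (h | ⟨hzu, -⟩)
        · exact absurd ((hinu₁ z h).trans hu₁) hz
        · exact Subtype.ext hzu
      · rintro ⟨z, hz⟩ (h | ⟨hzu, -⟩)
        · exact Subtype.ext (houtv₁ z h)
        · exact absurd hzu.symm hu₂w₁
      · intro a b ha1 ha2 hb1 hb2
        subst hu₁ h21
        tauto
    · -- disjoint case
      have hu₂w₁ : u₂ ≠ w₁ := by
        intro h; rw [h] at huw₂
        exact h12 (houtv₁ w₂ huw₂).symm
      have hv₂w₁ : v₂ ≠ w₁ := h21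
      have hu₁w₂ : u₁ ≠ w₂ := by
        intro h; rw [h] at huw₁
        exact h21 (houtv₂ w₁ huw₁).symm
      have hv₁w₂ : v₁ ≠ w₂ := h12
      refine ⟨_, _,
        step_to_remove (A := removeWire D w₁ u₁ v₁ hin₁ hout₁) (w := ⟨w₂, hw'⟩) (u := ⟨u₂, hu₂w₁⟩) (v := ⟨v₂, hv₂w₁⟩)
          hlab₂ (Or.inl huw₂) (Or.inl hwv₂) ?_ ?_ hinA houtA,
        step_to_remove (A := removeWire D w₂ u₂ v₂ hin₂ hout₂) (w := ⟨w₁, hw⟩) (u := ⟨u₁, hu₁w₂⟩) (v := ⟨v₁, hv₁w₂⟩)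
          hlab₁ (Or.inl huw₁) (Or.inl hwv₁) ?_ ?_ hinB houtB,
        double_iso D w₁ w₂ hw u₁ v₁ u₂ v₂ u₂ v₂ u₁ v₁ hin₁ hout₁ hin₂ hout₂
          hu₂w₁ hv₂w₁ hu₁w₂ hv₁w₂ hinA houtA hinB houtB ?_⟩
      · rintro ⟨z, hz⟩ (h | ⟨-, hzv⟩)
        · exact Subtype.ext (hinu₂ z h)
        · exact absurd hzv.symm hv₁w₂
      · rintro ⟨z, hz⟩ (h | ⟨hzu, -⟩)
        · exact Subtype.ext (houtv₂ z h)
        · exact absurd hzu.symm hu₁w₂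
      · rintro ⟨z, hz⟩ (h | ⟨-, hzv⟩)
        · exact Subtype.ext (hinu₁ z h)
        · exact absurd hzv.symm hv₂w₁
      · rintro ⟨z, hz⟩ (h | ⟨hzu, -⟩)
        · exact Subtype.ext (houtv₁ z h)
        · exact absurd hzu.symm hu₂w₁
      · intro a b ha1 ha2 hb1 hb2
        tauto

end Conf

section Main
variable {L : Type} {m n : ℕ}

lemma acc_step (D : FDia L m n) : Acc (fun A B : FDia L m n => Step B A) D := by
  have hwf : WellFounded (InvImage (· < ·) (fun D : FDia L m n => Fintype.card D.V)) :=
    InvImage.wf _ Nat.lt_wfRel.wf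
  exact Subrelation.accessible (fun {A B} h => step_card h) (hwf.apply D)

lemma confluent (D : FDia L m n) : ∀ D₁ D₂ : FDia L m n,
    Relation.ReflTransGen Step D D₁ → Relation.ReflTransGen Step D D₂ →
    ∃ E₁ E₂, Relation.ReflTransGen Step D₁ E₁ ∧ Relation.ReflTransGen Step D₂ E₂ ∧
      Iso E₁ E₂ := by
  induction acc_step D with
  | intro D _ ih =>
    intro D₁ D₂ h1 h2
    rcases Relation.ReflTransGen.cases_head h1 with rfl | ⟨A, hDA, hAD₁⟩
    · exact ⟨D₂, D₂, h2, .refl, iso_refl _⟩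
    rcases Relation.ReflTransGen.cases_head h2 with rfl | ⟨B, hDB, hBD₂⟩
    · exact ⟨D₁, D₁, .refl, h1, iso_refl _⟩
    rcases local_conf hDA hDB with hAB | ⟨A', B', hsA, hsB, hiso⟩
    · obtain ⟨D₂', hAD₂', hIso⟩ := rtg_transport hAB hBD₂
      obtain ⟨E₁, E₂', g1, g2, g3⟩ := ih A hDA D₁ D₂' hAD₁ hAD₂'
      obtain ⟨E₂, g4, g5⟩ := rtg_transport (iso_symm hIso) g2
      exact ⟨E₁, E₂, g1, g4, iso_trans g3 (iso_symm g5)⟩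
    · obtain ⟨F₁, F, f1, f2, f3⟩ := ih A hDA D₁ A' hAD₁ (.single hsA)
      obtain ⟨F', f4, f5⟩ := rtg_transport (iso_symm hiso) f2
      obtain ⟨E₂, G, g1, g2, g3⟩ := ih B hDB D₂ F' hBD₂
        ((Relation.ReflTransGen.single hsB).trans f4)
      obtain ⟨G', g4, g5⟩ := rtg_transport (iso_symm f5) g2
      obtain ⟨G'', g6, g7⟩ := rtg_transport f3 g4
      exact ⟨G'', E₂, f1.trans g6, g1,
        iso_trans g7 (iso_trans g5 (iso_symm g3))⟩

lemma exists_nf (D : FDia L m n) :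
    ∃ N, Relation.ReflTransGen Step D N ∧ NormalForm N := by
  induction acc_step D with
  | intro D _ ih =>
    by_cases h : ∃ D', Step D D'
    · obtain ⟨D', hD'⟩ := h
      obtain ⟨N, h1, h2⟩ := ih D' hD'
      exact ⟨N, (Relation.ReflTransGen.single hD').trans h1, h2⟩
    · exact ⟨D, .refl, h⟩

lemma nf_rtg {N X : FDia L m n} (hN : NormalForm N)
    (h : Relation.ReflTransGen Step N X) : X = N := by
  rcases Relation.ReflTransGen.cases_head h with rfl | ⟨A, hNA, -⟩
  · rfl
  · exact absurd ⟨A, hNA⟩ hN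

lemma nf_unique {D N N' : FDia L m n} (h1 : Relation.ReflTransGen Step D N)
    (hN : NormalForm N) (h2 : Relation.ReflTransGen Step D N')
    (hN' : NormalForm N') : Iso N N' := by
  obtain ⟨E₁, E₂, g1, g2, g3⟩ := confluent D N N' h1 h2
  obtain rfl := nf_rtg hN g1
  obtain rfl := nf_rtg hN' g2
  exact g3

lemma rtg_eqv {A B : FDia L m n} (h : Relation.ReflTransGen Step A B) :
    Relation.EqvGen (fun A B : FDia L m n => Iso A B ∨ Step A B) A B := by
  induction h with
  | refl => exact .refl A
  | tail _ hstep ih => exact .trans _ _ _ ih (.rel _ _ (Or.inr hstep))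

end Main


/-- the removal-oriented wire homeomorphism rewrite on labelled interfaced
DAGs is terminating and confluent (up to isomorphism); hence every LIDAG reduces to a
normal form which is unique up to isomorphism, and two LIDAGs are wire-homeomorphic iff
their normal forms are isomorphic. -/
theorem stmt_18 (L : Type) (m n : ℕ) :
    -- termination
    (∀ D : FDia L m n, Acc (fun A B => Step B A) D) ∧
    -- confluence up to isomorphism
    (∀ D D₁ D₂ : FDia L m n, Relation.ReflTransGen Step D D₁ →
      Relation.ReflTransGen Step D D₂ →
      ∃ E₁ E₂, Relation.ReflTransGen Step D₁ E₁ ∧ Relation.ReflTransGen Step D₂ E₂ ∧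
        Iso E₁ E₂) ∧
    -- existence and uniqueness (up to isomorphism) of normal forms
    (∀ D : FDia L m n, ∃ N, Relation.ReflTransGen Step D N ∧ NormalForm N ∧
      ∀ N', Relation.ReflTransGen Step D N' → NormalForm N' → Iso N N') ∧
    -- wire homeomorphism is characterised by the normal forms
    (∀ D₁ D₂ : FDia L m n,
      Relation.EqvGen (fun A B => Iso A B ∨ Step A B) D₁ D₂ ↔
      ∃ N₁ N₂, Relation.ReflTransGen Step D₁ N₁ ∧ NormalForm N₁ ∧
        Relation.ReflTransGen Step D₂ N₂ ∧ NormalForm N₂ ∧ Iso N₁ N₂) := by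
  
  refine ⟨fun D => acc_step D, fun D => confluent D, ?_, ?_⟩
  · intro D
    obtain ⟨N, h1, h2⟩ := exists_nf D
    exact ⟨N, h1, h2, fun N' hN' hnf => nf_unique h1 h2 hN' hnf⟩
  · intro D₁ D₂
    constructor
    · intro h
      induction h with
      | rel A B hr =>
          obtain ⟨N, hN, hNF⟩ := exists_nf B
          rcases hr with hiso | hstep
          · obtain ⟨N', hN', hIso⟩ := rtg_transport hiso hN
            exact ⟨N', N, hN', normal_transport hIso hNF, hN, hNF, hIso⟩
          · exact ⟨N, N, (Relation.ReflTransGen.single hstep).trans hN, hNF, hN, hNF,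
              iso_refl _⟩
      | refl A =>
          obtain ⟨N, hN, hNF⟩ := exists_nf A
          exact ⟨N, N, hN, hNF, hN, hNF, iso_refl _⟩
      | symm A B _ ih =>
          obtain ⟨N₁, N₂, a1, a2, a3, a4, a5⟩ := ih
          exact ⟨N₂, N₁, a3, a4, a1, a2, iso_symm a5⟩
      | trans A B C _ _ ih₁ ih₂ =>
          obtain ⟨N₁, N, a1, a2, a3, a4, a5⟩ := ih₁
          obtain ⟨N', N₂, b1, b2, b3, b4, b5⟩ := ih₂
          exact ⟨N₁, N₂, a1, a2, b3, b4,
            iso_trans a5 (iso_trans (nf_unique a3 a4 b1 b2) b5)⟩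
    · rintro ⟨N₁, N₂, h1, -, h2, -, hIso⟩
      exact .trans _ _ _ (rtg_eqv h1)
        (.trans _ _ _ (.rel _ _ (Or.inl hIso)) (.symm _ _ (rtg_eqv h2)))
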